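/- If u is an inner function with u(0) = 0, then D_u maps conj(H^2_0) onto conj(H^2_0). -/

import Mathlib

open MeasureTheory Complex AddCircle

noncomputable section

namespace Paper

/-- The period `2π`. -/
abbrev T : ℝ := 2 * Real.pi

instance : Fact (0 < T) := ⟨by positivity⟩

/-- Normalized Lebesgue (Haar) measure on the circle. -/
abbrev μ : Measure (AddCircle T) := haarAddCircle

/-- The space `L²(𝕋, dm)`. -/
abbrev L2 : Type := Lp ℂ 2 μ

lemma memLp_mul {u : AddCircle T → ℂ} (hm : AEStronglyMeasurable u μ)
    (hb : ∀ᵐ x ∂μ, ‖u x‖ ≤ 1) (f : L2) :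
    MemLp (fun x => u x * (f : AddCircle T → ℂ) x) 2 μ := by
  refine (Lp.memLp f).of_le (hm.mul (Lp.aestronglyMeasurable f)) ?_
  filter_upwards [hb] with x hx
  calc ‖u x * (f : AddCircle T → ℂ) x‖ = ‖u x‖ * ‖(f : AddCircle T → ℂ) x‖ := norm_mul _ _
    _ ≤ 1 * ‖(f : AddCircle T → ℂ) x‖ := by gcongr
    _ = ‖(f : AddCircle T → ℂ) x‖ := one_mul _

/-- Multiplication by a measurable function bounded by `1`, as a bounded operator on `L²`. -/
def mulCLM (u : AddCircle T → ℂ) (hm : AEStronglyMeasurable u μ)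
    (hb : ∀ᵐ x ∂μ, ‖u x‖ ≤ 1) : L2 →L[ℂ] L2 :=
  LinearMap.mkContinuous
    { toFun := fun f => (memLp_mul hm hb f).toLp _
      map_add' := fun f g => by
        show MemLp.toLp _ (memLp_mul hm hb (f + g)) = _
        have h : (fun x => u x * ((f + g : L2) : AddCircle T → ℂ) x)
            =ᵐ[μ] (fun x => u x * (f : AddCircle T → ℂ) x)
              + (fun x => u x * (g : AddCircle T → ℂ) x) := by
          filter_upwards [Lp.coeFn_add f g] with x hx
          simp only [Pi.add_apply, hx, mul_add]
        rw [MemLp.toLp_congr (memLp_mul hm hb (f + g))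
          ((memLp_mul hm hb f).add (memLp_mul hm hb g)) h, MemLp.toLp_add]
      map_smul' := fun c f => by
        have h : (fun x => u x * ((c • f : L2) : AddCircle T → ℂ) x)
            =ᵐ[μ] c • (fun x => u x * (f : AddCircle T → ℂ) x) := by
          filter_upwards [Lp.coeFn_smul c f] with x hx
          simp only [Pi.smul_apply, hx, smul_eq_mul]
          ring
        simp only [RingHom.id_apply]
        rw [MemLp.toLp_congr (memLp_mul hm hb (c • f))
          ((memLp_mul hm hb f).const_smul c) h, MemLp.toLp_const_smul] }
    1
    (fun f => by
      simp only [LinearMap.coe_mk, AddHom.coe_mk, one_mul]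
      rw [Lp.norm_toLp]
      have h1 : eLpNorm (fun x => u x * (f : AddCircle T → ℂ) x) 2 μ
          ≤ eLpNorm (f : AddCircle T → ℂ) 2 μ := by
        refine eLpNorm_mono_ae ?_
        filter_upwards [hb] with x hx
        calc ‖u x * (f : AddCircle T → ℂ) x‖
            = ‖u x‖ * ‖(f : AddCircle T → ℂ) x‖ := norm_mul _ _
          _ ≤ 1 * ‖(f : AddCircle T → ℂ) x‖ := by gcongr
          _ = ‖(f : AddCircle T → ℂ) x‖ := one_mul _
      calc (eLpNorm (fun x => u x * (f : AddCircle T → ℂ) x) 2 μ).toReal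
          ≤ (eLpNorm (f : AddCircle T → ℂ) 2 μ).toReal :=
            ENNReal.toReal_mono (Lp.eLpNorm_ne_top f) h1
        _ = ‖f‖ := (Lp.norm_def f).symm)

lemma memLp_conj (f : L2) :
    MemLp (fun x => (starRingEnd ℂ) ((f : AddCircle T → ℂ) x)) 2 μ := by
  refine (Lp.memLp f).of_le ?_ ?_
  · exact Complex.continuous_conj.comp_aestronglyMeasurable (Lp.aestronglyMeasurable f)
  · filter_upwards with x
    simp

/-- Complex conjugation on `L²`. -/
def conjL2 (f : L2) : L2 := (memLp_conj f).toLp _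

/-- The independent variable `z = e^{iθ}` as a function on the circle. -/
def zfun : AddCircle T → ℂ := fun x => fourier 1 x

lemma zfun_meas : AEStronglyMeasurable zfun μ :=
  ((map_continuous (fourier (T := T) 1)).aestronglyMeasurable)

lemma zfun_norm : ∀ᵐ x ∂μ, ‖zfun x‖ ≤ 1 := by
  filter_upwards with x
  simp [zfun, Circle.norm_coe]

/-- Multiplication by `z` (the bilateral shift `M` on `L²`). -/
def Mz : L2 →L[ℂ] L2 := mulCLM zfun zfun_meas zfun_norm

/-- Multiplication by `conj z`. -/
def Mzbar : L2 →L[ℂ] L2 :=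
  mulCLM (fun x => (starRingEnd ℂ) (zfun x))
    (Complex.continuous_conj.comp_aestronglyMeasurable zfun_meas)
    (by filter_upwards with x; simp [zfun, Circle.norm_coe])

/-- The Hardy space `H² = {f ∈ L² : f̂(n) = 0 for all n < 0}`. -/
def H2 : Submodule ℂ L2 where
  carrier := {f | ∀ n : ℤ, n < 0 → fourierBasis.repr f n = 0}
  add_mem' := by
    intro f g hf hg n hn
    simp [map_add, hf n hn, hg n hn]
  zero_mem' := by intro n hn; simp
  smul_mem' := by
    intro c f hf n hn
    simp [_root_.map_smul, hf n hn]

lemma continuous_coeff (n : ℤ) :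
    Continuous fun f : L2 => fourierBasis.repr f n := by
  rw [Metric.continuous_iff]
  intro f ε hε
  refine ⟨ε, hε, fun g hg => ?_⟩
  have h1 : fourierBasis.repr g n - fourierBasis.repr f n = fourierBasis.repr (g - f) n := by
    simp [map_sub]
  have h2 : ‖fourierBasis.repr (g - f) n‖ ≤ ‖fourierBasis.repr (g - f)‖ :=
    lp.norm_apply_le_norm (by norm_num) _ n
  have h3 : ‖fourierBasis.repr (g - f)‖ = ‖g - f‖ :=
    fourierBasis.repr.norm_map _
  calc dist (fourierBasis.repr g n) (fourierBasis.repr f n)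
      = ‖fourierBasis.repr (g - f) n‖ := by rw [dist_eq_norm, h1]
    _ ≤ ‖g - f‖ := by rw [← h3]; exact h2
    _ = dist g f := (dist_eq_norm g f).symm
    _ < ε := hg

lemma H2_isClosed : IsClosed (H2 : Set L2) := by
  have : (H2 : Set L2) =
      ⋂ n ∈ {m : ℤ | m < 0}, {f : L2 | fourierBasis.repr f n = 0} := by
    ext f
    simp only [Set.mem_iInter, Set.mem_setOf_eq]
    rfl
  rw [this]
  exact isClosed_biInter fun n _ => isClosed_eq (continuous_coeff n) continuous_const

instance : CompleteSpace H2 := H2_isClosed.completeSpace_coe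

/-- The Riesz projection `P⁺` of `L²` onto `H²`. -/
def Pp : L2 →L[ℂ] L2 := H2.subtypeL ∘L Submodule.orthogonalProjectionOnto H2

/-- The projection `P⁻ = I − P⁺` of `L²` onto `conj(H²₀)`. -/
def Pm : L2 →L[ℂ] L2 := ContinuousLinearMap.id ℂ L2 - Pp

/-- `conj(H²₀) = {f ∈ L² : f̂(n) = 0 for all n ≥ 0}`, the orthogonal complement of `H²`. -/
def Hm : Submodule ℂ L2 where
  carrier := {f | ∀ n : ℤ, 0 ≤ n → fourierBasis.repr f n = 0}
  add_mem' := by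
    intro f g hf hg n hn
    simp [map_add, hf n hn, hg n hn]
  zero_mem' := by intro n hn; simp
  smul_mem' := by
    intro c f hf n hn
    simp [_root_.map_smul, hf n hn]

/-- The constant function `1` as an element of `L²`. -/
def oneL2 : L2 := (memLp_const (1 : ℂ)).toLp _

/-- An inner function: a bounded measurable unimodular function on the circle whose
negative Fourier coefficients vanish. -/
structure InnerData where
  u : AddCircle T → ℂ
  meas : AEStronglyMeasurable u μ
  unim : ∀ᵐ x ∂μ, ‖u x‖ = 1
  anal : ∀ n : ℤ, n < 0 → fourierCoeff u n = 0

namespace InnerData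

variable (U : InnerData)

lemma bd : ∀ᵐ x ∂μ, ‖U.u x‖ ≤ 1 := by
  filter_upwards [U.unim] with x hx
  rw [hx]

/-- Multiplication by `u`: the operator `M_u` on `L²`. -/
def M : L2 →L[ℂ] L2 := mulCLM U.u U.meas U.bd

/-- Multiplication by `conj u`: the operator `M_{conj u}` on `L²`. -/
def Mc : L2 →L[ℂ] L2 :=
  mulCLM (fun x => (starRingEnd ℂ) (U.u x))
    (Complex.continuous_conj.comp_aestronglyMeasurable U.meas)
    (by filter_upwards [U.bd] with x hx; simpa using hx)

/-- `u` as an element of `L²`. -/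
def toL2 : L2 :=
  (memLp_top_of_bound U.meas 1 U.bd |>.mono_exponent le_top).toLp _

/-- The value `u(0)` of (the analytic extension of) `u` at the origin, i.e. the mean of `u`. -/
def a0 : ℂ := fourierCoeff U.u 0

/-- The subspace `uH²`. -/
def uH2 : Submodule ℂ L2 := Submodule.map (U.M : L2 →ₗ[ℂ] L2) H2

/-- The model space `K_u = H² ∩ (uH²)ᗮ`. -/
def Ku : Submodule ℂ L2 := H2 ⊓ (U.uH2)ᗮ

lemma Ku_isClosed : IsClosed (U.Ku : Set L2) := by
  have : (U.Ku : Set L2) = (H2 : Set L2) ∩ ((U.uH2)ᗮ : Set L2) := rfl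
  rw [this]
  exact H2_isClosed.inter (U.uH2).isClosed_orthogonal

instance : CompleteSpace U.Ku := U.Ku_isClosed.completeSpace_coe

/-- `K_u^⊥`, the orthogonal complement of the model space in `L²`. -/
def KP : Submodule ℂ L2 := (U.Ku)ᗮ

instance : CompleteSpace U.KP := (U.Ku).isClosed_orthogonal.completeSpace_coe

/-- The orthogonal projection `P_u : L² → K_u` (viewed as an operator on `L²`). -/
def Pu : L2 →L[ℂ] L2 := (U.Ku).subtypeL ∘L Submodule.orthogonalProjectionOnto U.Ku

/-- The dual of the compressed shift: `D_u = (I − P_u) M_z |_{K_u^⊥}`. -/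
def Du : U.KP →L[ℂ] U.KP :=
  Submodule.orthogonalProjectionOnto U.KP ∘L Mz ∘L (U.KP).subtypeL

/-- The conjugation `C_u f = u · conj(z f)` on `L²`. -/
def C (f : L2) : L2 := U.M (conjL2 (Mz f))

/-- The reproducing kernel of `K_u` at `0`: `k₀ᵘ = 1 − conj(u(0))·u`. -/
def k0 : L2 := oneL2 - (starRingEnd ℂ) U.a0 • U.toL2

/-- The similarity `V_u = P⁻ + (conj u/conj u(0)) P⁺` of the paper. -/
def V : L2 →L[ℂ] L2 := Pm + ((starRingEnd ℂ) U.a0)⁻¹ • (U.Mc ∘L Pp)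

/-- The inverse similarity `V_u⁻¹ = P⁻ + conj(u(0)) u P⁺`. -/
def Vinv : L2 →L[ℂ] L2 := Pm + (starRingEnd ℂ) U.a0 • (U.M ∘L Pp)

end InnerData

lemma Mz_mem_H2 {f : L2} (hf : f ∈ H2) : Mz f ∈ H2 := by
  intro n hn
  rw [fourierBasis_repr]
  have hcoe : (Mz f : AddCircle T → ℂ) =ᵐ[μ] fun x => zfun x * (f : AddCircle T → ℂ) x :=
    MemLp.coeFn_toLp (memLp_mul zfun_meas zfun_norm f)
  have h1 : fourierCoeff (Mz f : AddCircle T → ℂ) n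
      = fourierCoeff (f : AddCircle T → ℂ) (n - 1) := by
    unfold fourierCoeff
    rw [integral_congr_ae (by filter_upwards [hcoe] with x hx; rw [hx])]
    refine integral_congr_ae ?_
    filter_upwards with x
    have : fourier (-n) x * zfun x = fourier (-(n - 1)) x := by
      unfold zfun
      rw [show (-(n - 1) : ℤ) = -n + 1 by ring, fourier_add]
    simp only [smul_eq_mul]
    calc fourier (-n) x * (zfun x * (f : AddCircle T → ℂ) x)
        = (fourier (-n) x * zfun x) * (f : AddCircle T → ℂ) x := by ring
      _ = fourier (-(n - 1)) x * (f : AddCircle T → ℂ) x := by rw [this]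
  rw [h1]
  have := hf (n - 1) (by omega)
  rwa [fourierBasis_repr] at this

/-- The unilateral shift `S` on `H²`. -/
def Shift : H2 →L[ℂ] H2 :=
  (Mz ∘L H2.subtypeL).codRestrict H2 (fun x => Mz_mem_H2 x.2)

open scoped InnerProductSpace

lemma fourierCoeff_congr {f g : AddCircle T → ℂ} (h : f =ᵐ[μ] g) (n : ℤ) :
    fourierCoeff f n = fourierCoeff g n := by
  unfold fourierCoeff
  exact integral_congr_ae (by filter_upwards [h] with x hx; rw [hx])

lemma mulCLM_coeFn (u : AddCircle T → ℂ) (hm : AEStronglyMeasurable u μ)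
    (hb : ∀ᵐ x ∂μ, ‖u x‖ ≤ 1) (f : L2) :
    ((mulCLM u hm hb f : L2) : AddCircle T → ℂ) =ᵐ[μ] fun x => u x * (f : AddCircle T → ℂ) x :=
  MemLp.coeFn_toLp (memLp_mul hm hb f)

lemma repr_Mz (f : L2) (n : ℤ) :
    fourierBasis.repr (Mz f) n = fourierBasis.repr f (n - 1) := by
  rw [fourierBasis_repr, fourierBasis_repr]
  have hcoe : ((Mz f : L2) : AddCircle T → ℂ)
      =ᵐ[μ] fun x => zfun x * (f : AddCircle T → ℂ) x := mulCLM_coeFn _ _ _ f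
  rw [fourierCoeff_congr hcoe n]
  unfold fourierCoeff
  refine integral_congr_ae ?_
  filter_upwards with x
  have : fourier (-n) x * zfun x = fourier (-(n - 1)) x := by
    unfold zfun
    rw [show (-(n - 1) : ℤ) = -n + 1 by ring, fourier_add]
  simp only [smul_eq_mul]
  calc fourier (-n) x * (zfun x * (f : AddCircle T → ℂ) x)
      = (fourier (-n) x * zfun x) * (f : AddCircle T → ℂ) x := by ring
    _ = fourier (-(n - 1)) x * (f : AddCircle T → ℂ) x := by rw [this]

lemma repr_Mzbar (f : L2) (n : ℤ) :
    fourierBasis.repr (Mzbar f) n = fourierBasis.repr f (n + 1) := by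
  rw [fourierBasis_repr, fourierBasis_repr]
  have hcoe : ((Mzbar f : L2) : AddCircle T → ℂ)
      =ᵐ[μ] fun x => (starRingEnd ℂ) (zfun x) * (f : AddCircle T → ℂ) x := mulCLM_coeFn _ _ _ f
  rw [fourierCoeff_congr hcoe n]
  unfold fourierCoeff
  refine integral_congr_ae ?_
  filter_upwards with x
  have : fourier (-n) x * (starRingEnd ℂ) (zfun x) = fourier (-(n + 1)) x := by
    unfold zfun
    rw [← fourier_neg, show (-(n + 1) : ℤ) = -n + -1 by ring, fourier_add]
  simp only [smul_eq_mul]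
  calc fourier (-n) x * ((starRingEnd ℂ) (zfun x) * (f : AddCircle T → ℂ) x)
      = (fourier (-n) x * (starRingEnd ℂ) (zfun x)) * (f : AddCircle T → ℂ) x := by ring
    _ = fourier (-(n + 1)) x * (f : AddCircle T → ℂ) x := by rw [this]

lemma oneL2_coeFn : ((oneL2 : L2) : AddCircle T → ℂ) =ᵐ[μ] fun _ => (1 : ℂ) :=
  MemLp.coeFn_toLp (memLp_const (1 : ℂ))

lemma oneL2_eq : oneL2 = (fourierLp 2 0 : L2) := by
  refine Lp.ext ?_
  filter_upwards [oneL2_coeFn, coeFn_fourierLp 2 0] with x h1 h2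
  rw [h1, h2]
  simp

lemma repr_oneL2 (n : ℤ) :
    fourierBasis.repr oneL2 n = if n = 0 then 1 else 0 := by
  have : oneL2 = fourierBasis 0 := by
    rw [oneL2_eq, coe_fourierBasis]
  rw [this, fourierBasis.repr_self, lp.single_apply]
  rcases eq_or_ne n 0 with h | h
  · subst h
    simp
  · simp [h]

lemma inner_eq_zero_of_repr {f g : L2}
    (h : ∀ n : ℤ, fourierBasis.repr f n = 0 ∨ fourierBasis.repr g n = 0) :
    ⟪f, g⟫_ℂ = 0 := by
  rw [← fourierBasis.repr.inner_map_map f g, lp.inner_eq_tsum]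
  have hz : ∀ n : ℤ, ⟪fourierBasis.repr f n, fourierBasis.repr g n⟫_ℂ = 0 := by
    intro n
    rcases h n with h | h <;> simp [h]
  calc ∑' n, ⟪fourierBasis.repr f n, fourierBasis.repr g n⟫_ℂ
      = ∑' _ : ℤ, (0 : ℂ) := tsum_congr hz
    _ = 0 := tsum_zero

lemma Hm_le_H2_orth : Hm ≤ H2ᗮ := by
  intro f hf
  rw [Submodule.mem_orthogonal]
  intro g hg
  refine inner_eq_zero_of_repr fun n => ?_
  rcases lt_or_ge n 0 with h | h
  · exact Or.inl (hg n h)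
  · exact Or.inr (hf n h)

lemma Hm_le_KP (U : InnerData) : Hm ≤ U.KP :=
  le_trans Hm_le_H2_orth (Submodule.orthogonal_le inf_le_left)

lemma repr_conjL2 (f : L2) (n : ℤ) :
    fourierBasis.repr (conjL2 f) n = (starRingEnd ℂ) (fourierBasis.repr f (-n)) := by
  rw [fourierBasis_repr, fourierBasis_repr]
  have hcoe : ((conjL2 f : L2) : AddCircle T → ℂ)
      =ᵐ[μ] fun x => (starRingEnd ℂ) ((f : AddCircle T → ℂ) x) :=
    MemLp.coeFn_toLp (memLp_conj f)
  rw [fourierCoeff_congr hcoe n]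
  unfold fourierCoeff
  rw [← integral_conj]
  refine integral_congr_ae ?_
  filter_upwards with x
  simp only [smul_eq_mul, map_mul, ← fourier_neg, neg_neg, Complex.conj_conj]

lemma toL2_coeFn (U : InnerData) : ((U.toL2 : L2) : AddCircle T → ℂ) =ᵐ[μ] U.u :=
  MemLp.coeFn_toLp ((memLp_top_of_bound U.meas 1 U.bd).mono_exponent le_top)

lemma repr_toL2 (U : InnerData) (n : ℤ) :
    fourierBasis.repr U.toL2 n = fourierCoeff U.u n := by
  rw [fourierBasis_repr]
  exact fourierCoeff_congr (toL2_coeFn U) n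

lemma oneL2_mem_Ku (U : InnerData) (h0 : U.a0 = 0) : oneL2 ∈ U.Ku := by
  refine Submodule.mem_inf.mpr ⟨?_, ?_⟩
  · intro n hn
    rw [repr_oneL2, if_neg (by omega)]
  · rw [Submodule.mem_orthogonal]
    intro w hw
    rcases Submodule.mem_map.mp hw with ⟨h, hh, rfl⟩
    have hMh : ((U.M h : L2) : AddCircle T → ℂ)
        =ᵐ[μ] fun x => U.u x * (h : AddCircle T → ℂ) x := mulCLM_coeFn _ _ _ h
    have hcu : ((conjL2 U.toL2 : L2) : AddCircle T → ℂ)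
        =ᵐ[μ] fun x => (starRingEnd ℂ) ((U.toL2 : AddCircle T → ℂ) x) :=
      MemLp.coeFn_toLp (memLp_conj U.toL2)
    have key : ⟪(conjL2 U.toL2 : L2), (h : L2)⟫_ℂ = 0 := by
      refine inner_eq_zero_of_repr fun n => ?_
      rcases lt_or_ge n 0 with hn | hn
      · exact Or.inr (hh n hn)
      · left
        rw [repr_conjL2, repr_toL2]
        rcases eq_or_lt_of_le hn with hn' | hn'
        · rw [← hn', neg_zero]
          show (starRingEnd ℂ) U.a0 = 0
          rw [h0, map_zero]
        · rw [U.anal (-n) (by omega), map_zero]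
    have e1 : ⟪(U.M h : L2), oneL2⟫_ℂ
        = (starRingEnd ℂ) ⟪(conjL2 U.toL2 : L2), (h : L2)⟫_ℂ := by
      rw [MeasureTheory.L2.inner_def, MeasureTheory.L2.inner_def, ← integral_conj]
      refine integral_congr_ae ?_
      filter_upwards [hMh, oneL2_coeFn, hcu, toL2_coeFn U] with x h1 h2 h3 h4
      rw [h1, h2, h3]
      simp only [RCLike.inner_apply, map_mul, Complex.conj_conj]
      rw [h4]
      ring
    have e2 : ⟪(U.M h : L2), oneL2⟫_ℂ = 0 := by rw [e1, key, map_zero]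
    exact e2

lemma sub_mem_Hm {f : L2} (hf : f ∈ Hm) :
    Mz f - (fourierBasis.repr f (-1) : ℂ) • oneL2 ∈ Hm := by
  intro n hn
  simp only [map_sub, LinearIsometryEquiv.map_smul, lp.coeFn_sub, lp.coeFn_smul,
    Pi.sub_apply, Pi.smul_apply, smul_eq_mul]
  rw [repr_Mz, repr_oneL2]
  rcases eq_or_lt_of_le hn with hn' | hn'
  · rw [← hn', show ((0:ℤ) - 1) = -1 by norm_num]
    simp
  · rw [hf (n - 1) (by omega), if_neg (by omega)]
    simp

lemma proj_KP_add (U : InnerData) {g w : L2} (hg : g ∈ U.KP) (hw : w ∈ U.Ku) :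
    (Submodule.orthogonalProjectionOnto U.KP (g + w) : L2) = g := by
  have hw' : w ∈ (U.KP)ᗮ := Submodule.le_orthogonal_orthogonal U.Ku hw
  rw [map_add, Submodule.orthogonalProjectionOnto_apply_of_mem_orthogonal hw']
  have : Submodule.orthogonalProjectionOnto U.KP g = ⟨g, hg⟩ :=
    Submodule.orthogonalProjectionOnto_mem_subspace_eq_self (⟨g, hg⟩ : U.KP)
  rw [this, add_zero]

lemma zfun_mul_conj (x : AddCircle T) : zfun x * (starRingEnd ℂ) (zfun x) = 1 := by
  rw [Complex.mul_conj]
  norm_cast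
  simp [zfun, Complex.normSq_eq_norm_sq, Circle.norm_coe]

/-- If `u(0) = 0` then `D_u` maps `conj(H²₀)` onto `conj(H²₀)`. -/
theorem Du_maps_Hm_onto_Hm (U : InnerData) (h0 : U.a0 = 0) :
    (fun f : U.KP => (U.Du f : L2)) '' {f : U.KP | (f : L2) ∈ Hm} = (Hm : Set L2) := by
  ext g
  simp only [Set.mem_image, Set.mem_setOf_eq, SetLike.mem_coe]
  constructor
  · rintro ⟨f, hf, rfl⟩
    set c := fourierBasis.repr ((f : L2)) (-1) with hc
    have hv : Mz (f : L2) - c • oneL2 ∈ Hm := sub_mem_Hm hf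
    have hDu : (U.Du f : L2) = Mz (f : L2) - c • oneL2 := by
      show (Submodule.orthogonalProjectionOnto U.KP (Mz ((f : L2))) : L2) = _
      calc (Submodule.orthogonalProjectionOnto U.KP (Mz ((f : L2))) : L2)
          = (Submodule.orthogonalProjectionOnto U.KP ((Mz ((f : L2)) - c • oneL2) + c • oneL2) : L2) := by
            rw [sub_add_cancel]
        _ = Mz ((f : L2)) - c • oneL2 :=
            proj_KP_add U (Hm_le_KP U hv) (Submodule.smul_mem _ c (oneL2_mem_Ku U h0))
    rw [hDu]
    exact hv
  · intro hg
    have hmem : Mzbar g ∈ Hm := by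
      intro n hn
      rw [repr_Mzbar]
      exact hg (n + 1) (by omega)
    refine ⟨⟨Mzbar g, Hm_le_KP U hmem⟩, hmem, ?_⟩
    have hMM : Mz (Mzbar g) = g := by
      have c1 : ((Mz (Mzbar g) : L2) : AddCircle T → ℂ)
          =ᵐ[μ] fun x => zfun x * ((Mzbar g : L2) : AddCircle T → ℂ) x :=
        mulCLM_coeFn _ _ _ (Mzbar g)
      have c2 : ((Mzbar g : L2) : AddCircle T → ℂ)
          =ᵐ[μ] fun x => (starRingEnd ℂ) (zfun x) * (g : AddCircle T → ℂ) x :=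
        mulCLM_coeFn _ _ _ g
      refine Lp.ext ?_
      filter_upwards [c1, c2] with x h1 h2
      rw [h1, h2]
      calc zfun x * ((starRingEnd ℂ) (zfun x) * (g : AddCircle T → ℂ) x)
          = (zfun x * (starRingEnd ℂ) (zfun x)) * (g : AddCircle T → ℂ) x := by ring
        _ = (g : AddCircle T → ℂ) x := by rw [zfun_mul_conj, one_mul]
    show (Submodule.orthogonalProjectionOnto U.KP (Mz (Mzbar g)) : L2) = g
    rw [hMM]
    have : Submodule.orthogonalProjectionOnto U.KP g = ⟨g, Hm_le_KP U hg⟩ :=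
      Submodule.orthogonalProjectionOnto_mem_subspace_eq_self (⟨g, Hm_le_KP U hg⟩ : U.KP)
    rw [this]

end Paper
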